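/- Let J be a jellyfish graph with head H and legs isomorphic to the rooted tree L, and let d* = D(H). Then D(J) = min{ c : D(L, c) ≥ d* }, where D(L, c) counts pairwise inequivalent distinguishing labelings of the rooted tree L using at most c colors. -/

import Mathlib

open SimpleGraph

/-- `φ` is a distinguishing labeling of `G`: the only automorphism preserving `φ` is the identity. -/
def IsDist {V α : Type*} (G : SimpleGraph V) (φ : V → α) : Prop :=
  ∀ π : G ≃g G, (∀ v, φ (π v) = φ v) → ∀ v, π v = v

/-- The distinguishing number `D(G)`. -/
noncomputable def distNum {V : Type*} (G : SimpleGraph V) : ℕ :=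
  sInf {c : ℕ | ∃ φ : V → Fin c, IsDist G φ}

/-- `S` is a fixing set of `G`. -/
def IsFixingSet {V : Type*} (G : SimpleGraph V) (S : Set V) : Prop :=
  ∀ π : G ≃g G, (∀ v ∈ S, π v = v) → ∀ v, π v = v

/-- The fixing number `Fix(G)`. -/
noncomputable def fixNum {V : Type*} (G : SimpleGraph V) : ℕ :=
  sInf {n : ℕ | ∃ S : Set V, S.ncard = n ∧ IsFixingSet G S}

/-- `D(G, c)`: the number of pairwise inequivalent distinguishing labelings of `G`
using at most `c` colors. -/
noncomputable def countDist {V : Type*} (G : SimpleGraph V) (c : ℕ) : ℕ :=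
  Nat.card (Quot (fun φ ψ : {φ : V → Fin c // IsDist G φ} =>
    ∃ π : G ≃g G, ∀ v, φ.1 v = ψ.1 (π v)))

/-- The disjoint union of `r` copies of `G`. -/
def copies {V : Type*} (r : ℕ) (G : SimpleGraph V) : SimpleGraph (Fin r × V) where
  Adj x y := x.1 = y.1 ∧ G.Adj x.2 y.2
  symm := by
    constructor
    rintro ⟨i, u⟩ ⟨j, v⟩ ⟨h1, h2⟩
    exact ⟨h1.symm, h2.symm⟩
  loopless := by
    constructor
    rintro ⟨i, u⟩ ⟨-, h⟩
    exact G.loopless.irrefl u h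

/-- A distinguishing labeling of the graph `G` rooted at `r`:
the only root-preserving automorphism preserving `φ` is the identity. -/
def IsRDist {V α : Type*} (G : SimpleGraph V) (r : V) (φ : V → α) : Prop :=
  ∀ π : G ≃g G, π r = r → (∀ v, φ (π v) = φ v) → ∀ v, π v = v

/-- The distinguishing number of the graph `G` rooted at `r`. -/
noncomputable def rdistNum {V : Type*} (G : SimpleGraph V) (r : V) : ℕ :=
  sInf {c : ℕ | ∃ φ : V → Fin c, IsRDist G r φ}

/-- The number of pairwise inequivalent (under root-preserving automorphisms)
distinguishing labelings of the rooted graph `(G, r)` using at most `c` colors. -/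
noncomputable def rcountDist {V : Type*} (G : SimpleGraph V) (r : V) (c : ℕ) : ℕ :=
  Nat.card (Quot (fun φ ψ : {φ : V → Fin c // IsRDist G r φ} =>
    ∃ π : G ≃g G, π r = r ∧ ∀ v, φ.1 v = ψ.1 (π v)))

/-- `S` is a fixing set of the graph `G` rooted at `r` (w.r.t. root-preserving automorphisms). -/
def IsRFix {V : Type*} (G : SimpleGraph V) (r : V) (S : Set V) : Prop :=
  ∀ π : G ≃g G, π r = r → (∀ v ∈ S, π v = v) → ∀ v, π v = v

/-- The fixing number of the graph `G` rooted at `r`. -/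
noncomputable def rfixNum {V : Type*} (G : SimpleGraph V) (r : V) : ℕ :=
  sInf {n : ℕ | ∃ S : Set V, S.ncard = n ∧ IsRFix G r S}

/-- A rooted isomorphism between `(G, r)` and `(H, s)`. -/
def RootedIso {V W : Type*} (G : SimpleGraph V) (r : V) (H : SimpleGraph W) (s : W) : Prop :=
  ∃ e : G ≃g H, e r = s

/-- The jellyfish graph with head `H` and a copy of the rooted tree `(L, ρ)` attached
(by its root) at each vertex of `H`.  The leg at `a` is `{a} × B`, attached at `(a, ρ)`. -/
def jellyfish {A B : Type*} (H : SimpleGraph A) (L : SimpleGraph B) (ρ : B) :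
    SimpleGraph (A × B) where
  Adj x y := (x.2 = ρ ∧ y.2 = ρ ∧ H.Adj x.1 y.1) ∨ (x.1 = y.1 ∧ L.Adj x.2 y.2)
  symm := by
    constructor
    rintro ⟨a, b⟩ ⟨a', b'⟩ (⟨h1, h2, h3⟩ | ⟨h1, h2⟩)
    · exact Or.inl ⟨h2, h1, h3.symm⟩
    · exact Or.inr ⟨h1.symm, h2.symm⟩
  loopless := by
    constructor
    rintro ⟨a, b⟩ (⟨-, -, h⟩ | ⟨-, h⟩)
    · exact H.loopless.irrefl a h
    · exact L.loopless.irrefl b h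

section Jelly

variable {A B : Type*} (H : SimpleGraph A) (L : SimpleGraph B) (ρ : B)

lemma jellyfish_adj (x y : A × B) : (jellyfish H L ρ).Adj x y ↔
    (x.2 = ρ ∧ y.2 = ρ ∧ H.Adj x.1 y.1) ∨ (x.1 = y.1 ∧ L.Adj x.2 y.2) := Iff.rfl

/-- reachability invariance along a predicate closed under edges -/
lemma reach_ind {V : Type*} {G : SimpleGraph V} (S : V → Prop)
    (hS : ∀ u v, G.Adj u v → S u → S v) {u v : V} (h : G.Reachable u v) : S u → S v := by
  obtain ⟨w⟩ := h
  induction w with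
  | nil => exact id
  | cons ha p ih => exact fun hu => ih (hS _ _ ha hu)

lemma reach_del {V : Type*} {G : SimpleGraph V} (x y : V) {u v : V} (w : G.Walk u v) :
    (G \ fromEdgeSet {s(x,y)}).Reachable u v ∨
      (G \ fromEdgeSet {s(x,y)}).Reachable u x ∨ (G \ fromEdgeSet {s(x,y)}).Reachable u y := by
  induction w with
  | nil => exact Or.inl (Reachable.refl _)
  | @cons u m v h p ih =>
    by_cases he : s(u, m) = s(x, y)
    · rcases Sym2.eq_iff.mp he with ⟨rfl, rfl⟩ | ⟨rfl, rfl⟩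
      · exact Or.inr (Or.inl (Reachable.refl _))
      · exact Or.inr (Or.inr (Reachable.refl _))
    · have hadj : (G \ fromEdgeSet {s(x,y)}).Adj u m := by
        rw [sdiff_adj, fromEdgeSet_adj]
        exact ⟨h, fun hc => he hc.1⟩
      exact ih.imp hadj.reachable.trans (Or.imp hadj.reachable.trans hadj.reachable.trans)

lemma leg_edge_bridge (hL : L.IsTree) (a : A) {b y : B} (hby : L.Adj b y) :
    (jellyfish H L ρ).IsBridge s((a,b),(a,y)) := by
  have key : ∀ b y : B, L.Adj b y →
      (L \ fromEdgeSet {s(b,y)}).Reachable ρ b →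
      ¬ (jellyfish H L ρ \ fromEdgeSet {s((a,b),(a,y))}).Reachable (a,b) (a,y) := by
    intro b y hby hρb hre
    have hnby : ¬ (L \ fromEdgeSet {s(b,y)}).Reachable b y :=
      ((isBridge_iff.mp (isAcyclic_iff_forall_adj_isBridge.mp hL.IsAcyclic hby)))
    have hstep : ∀ u v : A × B,
        (jellyfish H L ρ \ fromEdgeSet {s((a,b),(a,y))}).Adj u v →
        ((L \ fromEdgeSet {s(b,y)}).Reachable ρ u.2 ∨ u.1 ≠ a) →
        ((L \ fromEdgeSet {s(b,y)}).Reachable ρ v.2 ∨ v.1 ≠ a) := by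
      intro u v hadj hu
      rw [sdiff_adj, fromEdgeSet_adj] at hadj
      have hne : s(u, v) ≠ s((a,b),(a,y)) := fun hc => hadj.2 ⟨hc, hadj.1.ne⟩
      rcases (jellyfish_adj H L ρ u v).mp hadj.1 with ⟨h1, h2, h3⟩ | ⟨h1, h2⟩
      · exact Or.inl (by rw [h2])
      · rcases hu with hr | hua
        · by_cases hva : u.1 = a
          · have hE : s(u.2, v.2) ≠ s(b, y) := by
              intro hc
              apply hne
              have hu' : u = (a, u.2) := Prod.ext hva rfl
              have hv' : v = (a, v.2) := Prod.ext (h1 ▸ hva) rfl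
              rcases Sym2.eq_iff.mp hc with ⟨hb', hy'⟩ | ⟨hb', hy'⟩
              · rw [hu', hv', hb', hy']
              · rw [hu', hv', hb', hy', Sym2.eq_swap]
            have hadjL : (L \ fromEdgeSet {s(b,y)}).Adj u.2 v.2 := by
              rw [sdiff_adj, fromEdgeSet_adj]
              exact ⟨h2, fun hc => hE hc.1⟩
            exact Or.inl (hr.trans hadjL.reachable)
          · exact Or.inr (h1 ▸ hva)
        · exact Or.inr (h1 ▸ hua)
    have := reach_ind _ hstep hre (Or.inl hρb)
    rcases this with h | h
    · exact hnby (hρb.symm.trans h)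
    · exact h rfl
  have hJadj : (jellyfish H L ρ).Adj (a,b) (a,y) := Or.inr ⟨rfl, hby⟩
  rw [isBridge_iff]
  obtain ⟨wρb⟩ := (hL.isConnected.preconnected ρ b)
  rcases reach_del b y wρb with h | h | h
  · exact key b y hby h
  · exact key b y hby h
  · have h' : (L \ fromEdgeSet {s(y,b)}).Reachable ρ y := by
      rw [show s(y,b) = s(b,y) from Sym2.eq_swap]; exact h
    intro hre
    refine key y b hby.symm h' ?_
    rw [show s((a,y),(a,b)) = s((a,b),(a,y)) from Sym2.eq_swap]
    exact hre.symm

end Jelly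


section Jelly2

variable {A B : Type*} [DecidableEq A] (H : SimpleGraph A) (L : SimpleGraph B) (ρ : B)

lemma exists_first_edge {V : Type*} {G : SimpleGraph V} {v : V} (q : G.Walk v v)
    (hq : q.IsCycle) : ∃ w, G.Adj v w ∧ s(v, w) ∈ q.edges := by
  cases q with
  | nil => exact absurd rfl hq.ne_nil
  | cons h t => exact ⟨_, h, by simp⟩

lemma cycle_support_head (hL : L.IsTree) {u : A × B} {q : (jellyfish H L ρ).Walk u u}
    (hq : q.IsCycle) : ∀ v ∈ q.support, v.2 = ρ := by
  classical
  intro v hv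
  by_contra hvρ
  have hq' := hq.rotate hv
  obtain ⟨w, hadj, hmem⟩ := exists_first_edge _ hq'
  rcases (jellyfish_adj H L ρ v w).mp hadj with ⟨h1, -, -⟩ | ⟨h1, h2⟩
  · exact hvρ h1
  · have hbridge := leg_edge_bridge H L ρ hL v.1 h2
    have hw : w = (v.1, w.2) := Prod.ext h1.symm rfl
    refine ((isBridge_iff_adj_and_forall_cycle_notMem (by rw [← hw]; exact hadj)).mp hbridge) _ hq' ?_
    rw [hw] at hmem
    simpa using hmem

lemma exists_cycle_head (hH : ∃ (a : A) (p : H.Walk a a), p.IsHamiltonianCycle) (a : A) :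
    ∃ (u : A × B) (q : (jellyfish H L ρ).Walk u u), q.IsCycle ∧ (a, ρ) ∈ q.support := by
  obtain ⟨a₀, p, hp⟩ := hH
  let f : H →g (jellyfish H L ρ) := ⟨fun a => (a, ρ), fun h => Or.inl ⟨rfl, rfl, h⟩⟩
  have hinj : Function.Injective f := fun x y h => congrArg Prod.fst h
  refine ⟨(a₀, ρ), p.map f, (SimpleGraph.Walk.map_isCycle_iff_of_injective hinj).mpr hp.isCycle, ?_⟩
  rw [SimpleGraph.Walk.support_map]
  exact List.mem_map_of_mem (hp.mem_support a)

variable {H L}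

lemma iso_head (hH : ∃ (a : A) (p : H.Walk a a), p.IsHamiltonianCycle) (hL : L.IsTree)
    (π : jellyfish H L ρ ≃g jellyfish H L ρ) (a : A) : (π (a, ρ)).2 = ρ := by
  obtain ⟨u, q, hq, hmem⟩ := exists_cycle_head H L ρ hH a
  have hinj : Function.Injective π.toHom := π.toEquiv.injective
  have hq2 : ((q.map π.toHom).IsCycle) :=
    (SimpleGraph.Walk.map_isCycle_iff_of_injective hinj).mpr hq
  refine cycle_support_head H L ρ hL hq2 (π (a, ρ)) ?_
  rw [SimpleGraph.Walk.support_map]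
  exact List.mem_map_of_mem hmem

lemma iso_head_rev (hH : ∃ (a : A) (p : H.Walk a a), p.IsHamiltonianCycle) (hL : L.IsTree)
    (π : jellyfish H L ρ ≃g jellyfish H L ρ) {v : A × B} (h : (π v).2 = ρ) : v.2 = ρ := by
  have hthis := iso_head ρ hH hL π.symm (π v).1
  have hv : ((π v).1, ρ) = π v := Prod.ext_iff.mpr ⟨rfl, h.symm⟩
  rw [hv, RelIso.symm_apply_apply] at hthis
  exact hthis

lemma iso_fst (hH : ∃ (a : A) (p : H.Walk a a), p.IsHamiltonianCycle) (hL : L.IsTree)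
    (π : jellyfish H L ρ ≃g jellyfish H L ρ) (x : A) (b : B) :
    (π (x, b)).1 = (π (x, ρ)).1 := by
  have hkey : ∀ (c d : B), L.Reachable c d →
      ((π (x, c)).1 = (π (x, ρ)).1 → (π (x, d)).1 = (π (x, ρ)).1) := by
    intro c d h
    obtain ⟨w⟩ := h
    induction w with
    | nil => exact id
    | @cons c m d hadj w ih =>
      intro hc
      apply ih
      have hJ : (jellyfish H L ρ).Adj (π (x, c)) (π (x, m)) :=
        π.map_adj_iff.mpr (Or.inr ⟨rfl, hadj⟩)
      rcases hJ with ⟨h1, h2, -⟩ | ⟨h1, -⟩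
      · have hc' : c = ρ := iso_head_rev ρ hH hL π h1
        have hm' : m = ρ := iso_head_rev ρ hH hL π h2
        rw [hc', hm'] at hadj
        exact absurd hadj (L.loopless.irrefl ρ)
      · rw [← h1]; exact hc
  exact hkey ρ b (hL.isConnected.preconnected ρ b) rfl

theorem jelly_structure (hH : ∃ (a : A) (p : H.Walk a a), p.IsHamiltonianCycle) (hL : L.IsTree)
    (π : jellyfish H L ρ ≃g jellyfish H L ρ) :
    ∃ (σ : H ≃g H) (τ : A → (L ≃g L)), (∀ x, τ x ρ = ρ) ∧
      ∀ x b, π (x, b) = (σ x, (τ x) b) := by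
  have hhead : ∀ (e : jellyfish H L ρ ≃g jellyfish H L ρ) (x : A),
      e (x, ρ) = ((e (x, ρ)).1, ρ) :=
    fun e x => Prod.ext_iff.mpr ⟨rfl, iso_head ρ hH hL e x⟩
  -- head permutation
  have hss' : ∀ x : A, (π.symm ((π (x, ρ)).1, ρ)).1 = x := by
    intro x
    rw [← hhead π x, RelIso.symm_apply_apply]
  have hs's : ∀ x : A, (π ((π.symm (x, ρ)).1, ρ)).1 = x := by
    intro x
    rw [← hhead π.symm x, RelIso.apply_symm_apply]
  have hmono : ∀ (e : jellyfish H L ρ ≃g jellyfish H L ρ) (x x' : A), H.Adj x x' →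
      H.Adj (e (x, ρ)).1 (e (x', ρ)).1 := by
    intro e x x' h
    have hJ : (jellyfish H L ρ).Adj (e (x, ρ)) (e (x', ρ)) :=
      e.map_adj_iff.mpr (Or.inl ⟨rfl, rfl, h⟩)
    rcases hJ with ⟨-, -, h3⟩ | ⟨-, h2⟩
    · exact h3
    · rw [iso_head ρ hH hL e x, iso_head ρ hH hL e x'] at h2
      exact absurd h2 (L.loopless.irrefl ρ)
  have hiff : ∀ x x' : A, H.Adj (π (x, ρ)).1 (π (x', ρ)).1 ↔ H.Adj x x' := by
    intro x x'
    constructor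
    · intro h
      have h2 := hmono π.symm _ _ h
      rwa [hss', hss'] at h2
    · exact hmono π x x'
  let σ : H ≃g H :=
    { toFun := fun x => (π (x, ρ)).1
      invFun := fun x => (π.symm (x, ρ)).1
      left_inv := hss'
      right_inv := hs's
      map_rel_iff' := fun {x x'} => hiff x x' }
  -- the leg isomorphisms
  have hfst' : ∀ (e : jellyfish H L ρ ≃g jellyfish H L ρ) (x : A) (b : B),
      (e (x, b)).1 = (e (x, ρ)).1 := fun e => iso_fst ρ hH hL e
  have hπeq : ∀ x b, π (x, b) = ((π (x, ρ)).1, (π (x, b)).2) :=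
    fun x b => Prod.ext (hfst' π x b) rfl
  have hsymmfst : ∀ (x : A) (b : B),
      π.symm ((π (x, ρ)).1, b) = (x, (π.symm ((π (x, ρ)).1, b)).2) := by
    intro x b
    refine Prod.ext ?_ rfl
    rw [hfst' π.symm _ b, ← hhead π x, RelIso.symm_apply_apply]
  have linv : ∀ (x : A) (b : B), (π.symm ((π (x, ρ)).1, (π (x, b)).2)).2 = b := by
    intro x b
    rw [← hπeq x b, RelIso.symm_apply_apply]
  have rinv : ∀ (x : A) (b : B), (π (x, (π.symm ((π (x, ρ)).1, b)).2)).2 = b := by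
    intro x b
    rw [← hsymmfst x b, RelIso.apply_symm_apply]
  have hmapiff : ∀ (x : A) (b b' : B),
      L.Adj (π (x, b)).2 (π (x, b')).2 ↔ L.Adj b b' := by
    intro x b b'
    constructor
    · intro h
      have hJ : (jellyfish H L ρ).Adj (π (x, b)) (π (x, b')) :=
        Or.inr ⟨(hfst' π x b).trans (hfst' π x b').symm, h⟩
      have hJ2 := π.map_adj_iff.mp hJ
      rcases hJ2 with ⟨-, -, h3⟩ | ⟨-, h2⟩
      · exact absurd h3 (H.loopless.irrefl x)
      · exact h2
    · intro h
      have hJ : (jellyfish H L ρ).Adj (π (x, b)) (π (x, b')) :=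
        π.map_adj_iff.mpr (Or.inr ⟨rfl, h⟩)
      rcases hJ with ⟨h1, h2, h3⟩ | ⟨-, h2⟩
      · rw [hfst' π x b, hfst' π x b'] at h3
        exact absurd h3 (H.loopless.irrefl _)
      · exact h2
  refine ⟨σ, fun x =>
    { toFun := fun b => (π (x, b)).2
      invFun := fun b => (π.symm ((π (x, ρ)).1, b)).2
      left_inv := linv x
      right_inv := rinv x
      map_rel_iff' := fun {b b'} => hmapiff x b b' }, ?_, ?_⟩
  · intro x
    exact iso_head ρ hH hL π x
  · intro x b
    exact Prod.ext (hfst' π x b) rfl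

end Jelly2


section Jelly3

variable {A B : Type*} (H : SimpleGraph A) (L : SimpleGraph B) (ρ : B)

/-- Build a jellyfish automorphism from a head automorphism and leg automorphisms. -/
def mkJellyIso (σ : H ≃g H) (τ : A → (L ≃g L)) (hτ : ∀ x, (τ x) ρ = ρ) :
    jellyfish H L ρ ≃g jellyfish H L ρ where
  toEquiv := Equiv.prodShear σ.toEquiv (fun x => (τ x).toEquiv)
  map_rel_iff' := by
    rintro ⟨x, b⟩ ⟨x', b'⟩
    show (jellyfish H L ρ).Adj (σ x, (τ x) b) (σ x', (τ x') b') ↔ _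
    constructor
    · rintro (⟨h1, h2, h3⟩ | ⟨h1, h2⟩)
      · have hb : b = ρ := (τ x).toEquiv.injective
          ((show (τ x) b = ρ from h1).trans (hτ x).symm)
        have hb' : b' = ρ := (τ x').toEquiv.injective
          ((show (τ x') b' = ρ from h2).trans (hτ x').symm)
        exact Or.inl ⟨hb, hb', σ.map_rel_iff.mp h3⟩
      · have hx : x = x' := σ.toEquiv.injective h1
        subst hx
        exact Or.inr ⟨rfl, (τ x).map_rel_iff.mp h2⟩
    · rintro (⟨h1, h2, h3⟩ | ⟨h1, h2⟩)
      · dsimp at h1 h2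
        subst h1; subst h2
        exact Or.inl ⟨hτ x, hτ x', σ.map_rel_iff.mpr h3⟩
      · dsimp at h1 h2
        subst h1
        exact Or.inr ⟨rfl, (τ x).map_rel_iff.mpr h2⟩

lemma mkJellyIso_apply (σ : H ≃g H) (τ : A → (L ≃g L)) (hτ : ∀ x, (τ x) ρ = ρ)
    (x : A) (b : B) : mkJellyIso H L ρ σ τ hτ (x, b) = (σ x, (τ x) b) := rfl

/-- The equivalence relation on rooted-distinguishing labelings. -/
lemma rrel_equivalence (c : ℕ) :
    Equivalence (fun φ ψ : {φ : B → Fin c // IsRDist L ρ φ} =>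
      ∃ π : L ≃g L, π ρ = ρ ∧ ∀ v, φ.1 v = ψ.1 (π v)) := by
  constructor
  · intro φ
    exact ⟨RelIso.refl L.Adj, rfl, fun v => rfl⟩
  · rintro φ ψ ⟨π, hρ, h⟩
    refine ⟨π.symm, ?_, ?_⟩
    · conv_lhs => rw [← hρ]
      exact RelIso.symm_apply_apply _ _
    · intro v
      have := h (π.symm v)
      rwa [RelIso.apply_symm_apply, eq_comm] at this
  · rintro φ ψ χ ⟨π₁, h1, f1⟩ ⟨π₂, h2, f2⟩
    refine ⟨π₁.trans π₂, ?_, ?_⟩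
    · show π₂ (π₁ ρ) = ρ
      rw [h1, h2]
    · intro v
      rw [f1 v, f2 (π₁ v)]
      rfl

lemma quot_mk_eq_iff (c : ℕ) (φ ψ : {φ : B → Fin c // IsRDist L ρ φ}) :
    Quot.mk (fun φ ψ : {φ : B → Fin c // IsRDist L ρ φ} =>
        ∃ π : L ≃g L, π ρ = ρ ∧ ∀ v, φ.1 v = ψ.1 (π v)) φ =
      Quot.mk _ ψ ↔ ∃ π : L ≃g L, π ρ = ρ ∧ ∀ v, φ.1 v = ψ.1 (π v) := by
  rw [Quot.eq, (rrel_equivalence L ρ c).eqvGen_iff]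

end Jelly3


/-- For a jellyfish graph `J` with head `H` and legs isomorphic to the rooted tree `(L, ρ)`,
`D(J) = min {c : D(L, c) ≥ D(H)}`. -/
theorem dist_jellyfish {A B : Type*} [Fintype A] [DecidableEq A] [Fintype B]
    (H : SimpleGraph A) (L : SimpleGraph B) (ρ : B)
    (hH : ∃ (a : A) (p : H.Walk a a), p.IsHamiltonianCycle) (hL : L.IsTree) :
    distNum (jellyfish H L ρ) = sInf {c : ℕ | distNum H ≤ rcountDist L ρ c} := by
  classical
  have hset : {c : ℕ | ∃ φ : A × B → Fin c, IsDist (jellyfish H L ρ) φ} =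
      {c : ℕ | distNum H ≤ rcountDist L ρ c} := by
    ext c
    simp only [Set.mem_setOf_eq]
    haveI : Finite {ψ : B → Fin c // IsRDist L ρ ψ} := Subtype.finite
    haveI : Finite (Quot (fun φ ψ : {φ : B → Fin c // IsRDist L ρ φ} =>
        ∃ π : L ≃g L, π ρ = ρ ∧ ∀ v, φ.1 v = ψ.1 (π v))) := Quot.finite _
    set Q := Quot (fun φ ψ : {φ : B → Fin c // IsRDist L ρ φ} =>
        ∃ π : L ≃g L, π ρ = ρ ∧ ∀ v, φ.1 v = ψ.1 (π v)) with hQ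
    constructor
    · rintro ⟨φ, hφ⟩
      -- each leg labeling is rooted-distinguishing
      have hleg : ∀ a : A, IsRDist L ρ (fun b => φ (a, b)) := by
        intro a τ hτρ hpres
        set T : A → (L ≃g L) := fun x => if x = a then τ else RelIso.refl L.Adj with hT
        have hTρ : ∀ x, T x ρ = ρ := by
          intro x
          by_cases hx : x = a
          · simp [hT, hx, hτρ]
          · simp [hT, hx]
        have hpresJ : ∀ v : A × B,
            φ (mkJellyIso H L ρ (RelIso.refl H.Adj) T hTρ v) = φ v := by
          rintro ⟨x, b⟩
          rw [mkJellyIso_apply]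
          by_cases hx : x = a
          · subst hx
            simp only [hT, if_pos rfl]
            exact hpres b
          · simp only [hT, if_neg hx]
            rfl
        have hid := hφ _ hpresJ
        intro b
        have h2 := hid (a, b)
        rw [mkJellyIso_apply] at h2
        have h3 := congrArg Prod.snd h2
        simpa [hT] using h3
      obtain ⟨g⟩ : Nonempty (Q ↪ Fin (Nat.card Q)) := by
        cases nonempty_fintype Q
        exact ⟨(Fintype.equivFin Q).toEmbedding.trans
          (Fin.castLEEmb (le_of_eq Nat.card_eq_fintype_card.symm))⟩
      have hmem : Nat.card Q ∈ {k : ℕ | ∃ ψ : A → Fin k, IsDist H ψ} := by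
        refine ⟨fun a => g (Quot.mk _ ⟨fun b => φ (a, b), hleg a⟩), ?_⟩
        intro σ hσ
        have hcls : ∀ x : A, ∃ π : L ≃g L, π ρ = ρ ∧
            ∀ v, φ (σ x, v) = φ (x, π v) := by
          intro x
          have h1 := g.injective (hσ x)
          obtain ⟨π, hπ1, hπ2⟩ := (quot_mk_eq_iff L ρ c _ _).mp h1
          exact ⟨π, hπ1, hπ2⟩
        choose τ hτρ hτ using hcls
        have hsρ : ∀ x, (τ x).symm ρ = ρ := by
          intro x
          conv_lhs => rw [← hτρ x]
          exact RelIso.symm_apply_apply _ _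
        have hpresJ : ∀ v : A × B,
            φ (mkJellyIso H L ρ σ (fun x => (τ x).symm) hsρ v) = φ v := by
          rintro ⟨x, b⟩
          rw [mkJellyIso_apply]
          have h2 := hτ x ((τ x).symm b)
          rwa [RelIso.apply_symm_apply] at h2
        have hid := hφ _ hpresJ
        intro x
        have h2 := hid (x, ρ)
        rw [mkJellyIso_apply] at h2
        exact congrArg Prod.fst h2
      exact Nat.sInf_le hmem
    · intro hc
      have hSH : {k : ℕ | ∃ ψ : A → Fin k, IsDist H ψ}.Nonempty :=
        ⟨Fintype.card A, ⟨fun a => Fintype.equivFin A a,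
          fun π hp v => (Fintype.equivFin A).injective (hp v)⟩⟩
      obtain ⟨ψ, hψ⟩ := Nat.sInf_mem hSH
      obtain ⟨g⟩ : Nonempty (Fin (distNum H) ↪ Q) := by
        cases nonempty_fintype Q
        refine ⟨(Fin.castLEEmb ?_).trans
          (Fintype.equivFin Q).symm.toEmbedding⟩
        rw [← Nat.card_eq_fintype_card]
        exact hc
      refine ⟨fun v => ((g (ψ v.1)).out).1 v.2, ?_⟩
      intro π hpres
      obtain ⟨σ, τ, hτρ, hπ⟩ := jelly_structure ρ hH hL π
      have hσ : ∀ a, σ a = a := by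
        refine hψ σ ?_
        intro a
        apply g.injective
        rw [← Quot.out_eq (g (ψ (σ a))), ← Quot.out_eq (g (ψ a))]
        apply Quot.sound
        refine ⟨(τ a).symm, ?_, ?_⟩
        · conv_lhs => rw [← hτρ a]
          exact RelIso.symm_apply_apply _ _
        · intro v
          have h2 := hpres (a, (τ a).symm v)
          rw [hπ a ((τ a).symm v)] at h2
          rw [RelIso.apply_symm_apply] at h2
          exact h2
      rintro ⟨a, b⟩
      rw [hπ a b, hσ a]
      have hres : ∀ v, ((g (ψ a)).out).1 ((τ a) v) = ((g (ψ a)).out).1 v := by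
        intro v
        have h2 := hpres (a, v)
        rw [hπ a v, hσ a] at h2
        exact h2
      have h3 := (g (ψ a)).out.2 (τ a) (hτρ a) hres b
      rw [h3]
  exact congrArg sInf hset
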